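/- Suppose T_Z is invertible with ‖T_Z^{−1}‖ the operator norm of its inverse, and ‖A(m,n)x‖_m ≤ M(m/n)^a‖x‖_n for m ≥ n. Then with L = max{M 2^a, M 2^{a+1}‖T_Z^{−1}‖}, for all m ≥ n and x ∈ X(n): ‖A(m,n)x‖_m ≤ L ‖x‖_n. -/

import Mathlib

open scoped BigOperators

variable {X : Type*} [NormedAddCommGroup X] [NormedSpace ℝ X]

/-- The cocycle generated by a sequence of bounded operators:
`coc A n m = 𝓐(m,n) = A_{m-1} ⋯ A_n` for `m > n`, and `= Id` for `m ≤ n`. -/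
def coc (A : ℕ → X →L[ℝ] X) (n : ℕ) : ℕ → X →L[ℝ] X
  | 0 => 1
  | m + 1 => if n ≤ m then (A m).comp (coc A n m) else 1

/-- The formal difference operator: `(T x)_1 = 0` and
`(T x)_{m+1} = (m+1)(x_{m+1} - A_m x_m)` for `m ≥ 1`. -/
noncomputable def TOp (A : ℕ → X →L[ℝ] X) (x : ℕ → X) : ℕ → X :=
  fun m => if m ≤ 1 then 0 else (m : ℝ) • (x m - A (m - 1) (x (m - 1)))

/-- `N` is a family (indexed by `m ≥ 1`) of norms on `X`, each equivalent to `‖·‖`. -/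
def NormFamily (N : ℕ → X → ℝ) : Prop :=
  ∀ m, 1 ≤ m →
    (∀ x y : X, N m (x + y) ≤ N m x + N m y) ∧
    (∀ (c : ℝ) (x : X), N m (c • x) = |c| * N m x) ∧
    (∃ c C : ℝ, 0 < c ∧ ∀ x : X, c * ‖x‖ ≤ N m x ∧ N m x ≤ C * ‖x‖)

/-- Membership in `Y`: `sup_{m ≥ 1} ‖x_m‖_m < ∞`. -/
def MemY (N : ℕ → X → ℝ) (x : ℕ → X) : Prop :=
  ∃ S : ℝ, ∀ m, 1 ≤ m → N m (x m) ≤ S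

/-- Membership in `Y₀ = Y_{{0}}`: bounded and `x_1 = 0`. -/
def MemY0 (N : ℕ → X → ℝ) (x : ℕ → X) : Prop := x 1 = 0 ∧ MemY N x

/-- Membership in `Y_Z`: bounded and `x_1 ∈ Z`. -/
def MemYZ (N : ℕ → X → ℝ) (Z : Set X) (x : ℕ → X) : Prop := x 1 ∈ Z ∧ MemY N x

/-- Membership in the domain `𝒟(T_Z)`: `x ∈ Y_Z` and
`sup_{m ≥ 1} (m+1)‖x_{m+1} - A_m x_m‖_{m+1} < ∞`. -/
def MemD (A : ℕ → X →L[ℝ] X) (N : ℕ → X → ℝ) (Z : Set X) (x : ℕ → X) : Prop :=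
  MemYZ N Z x ∧ MemY N (TOp A x)

/-- Polynomial dichotomy (with given projections and constants) with respect to the
sequence of norms `N`.  The bound along the unstable direction is stated in the
equivalent "forward" form: `‖u‖_m ≤ D (m/n)^λ ‖𝓐(n,m)u‖_n` for `u ∈ Ker P_m`, `m ≤ n`. -/
def PolyDichWith (A : ℕ → X →L[ℝ] X) (N : ℕ → X → ℝ) (P : ℕ → X →L[ℝ] X)
    (D lam : ℝ) : Prop :=
  (∀ m, 1 ≤ m → (P m).comp (P m) = P m) ∧
  (∀ m, 1 ≤ m → (A m).comp (P m) = (P (m + 1)).comp (A m)) ∧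
  (∀ m, 1 ≤ m → ∀ y, P (m + 1) y = 0 → ∃! x, P m x = 0 ∧ A m x = y) ∧
  (∀ m n, 1 ≤ n → n ≤ m → ∀ x : X,
      N m (coc A n m (P n x)) ≤ D * (((m : ℝ) / (n : ℝ)) ^ (-lam)) * N n x) ∧
  (∀ m n, 1 ≤ m → m ≤ n → ∀ u : X, P m u = 0 →
      N m u ≤ D * (((m : ℝ) / (n : ℝ)) ^ lam) * N n (coc A m n u))

/-- `(A_m)` admits a polynomial dichotomy with respect to the sequence of norms `N`. -/
def PolyDich (A : ℕ → X →L[ℝ] X) (N : ℕ → X → ℝ) : Prop :=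
  ∃ (P : ℕ → X →L[ℝ] X) (D lam : ℝ), 0 < D ∧ 0 < lam ∧ PolyDichWith A N P D lam

/-- The stable space `X(n) = {x : sup_{m ≥ n} ‖𝓐(m,n)x‖_m < ∞}`. -/
def Xs (A : ℕ → X →L[ℝ] X) (N : ℕ → X → ℝ) (n : ℕ) : Set X :=
  {x : X | ∃ S : ℝ, ∀ m, n ≤ m → N m (coc A n m x) ≤ S}

/-- The unstable space `Z(n) = 𝓐(n,1) Z`. -/
def Zs (A : ℕ → X →L[ℝ] X) (Z : Set X) (n : ℕ) : Set X := coc A 1 n '' Z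

/-- `T_Z : 𝒟(T_Z) → Y₀` is invertible, with `κ` a bound for the norm of its inverse
(with respect to the graph norm on the domain). -/
def TInv (A : ℕ → X →L[ℝ] X) (N : ℕ → X → ℝ) (Z : Set X) (κ : ℝ) : Prop :=
  (∀ y, MemY0 N y → ∃ x, MemD A N Z x ∧ ∀ m, 1 ≤ m → TOp A x m = y m) ∧
  (∀ x x', MemD A N Z x → MemD A N Z x' →
      (∀ m, 1 ≤ m → TOp A x m = TOp A x' m) → ∀ m, 1 ≤ m → x m = x' m) ∧
  (∀ y x, MemY0 N y → MemD A N Z x → (∀ m, 1 ≤ m → TOp A x m = y m) →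
      ∀ S : ℝ, (∀ m, 1 ≤ m → N m (y m) ≤ S) → ∀ m, 1 ≤ m → N m (x m) ≤ κ * S)

/-- The uniform polynomial growth bound `‖𝓐(m,n)x‖_m ≤ M (m/n)^a ‖x‖_n` for `m ≥ n`. -/
def Grow (A : ℕ → X →L[ℝ] X) (N : ℕ → X → ℝ) (M a : ℝ) : Prop :=
  ∀ m n, 1 ≤ n → n ≤ m → ∀ x : X,
    N m (coc A n m x) ≤ M * (((m : ℝ) / (n : ℝ)) ^ a) * N n x


private lemma coc_of_le (A : ℕ → X →L[ℝ] X) {n k : ℕ} (h : k ≤ n) : coc A n k = 1 := by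
  induction k with
  | zero => rfl
  | succ j ih => rw [coc, if_neg (by omega)]

private lemma coc_succ' (A : ℕ → X →L[ℝ] X) {n k : ℕ} (h : n ≤ k) :
    coc A n (k + 1) = (A k).comp (coc A n k) := by
  rw [coc, if_pos h]

private lemma coc_self' (A : ℕ → X →L[ℝ] X) (n : ℕ) : coc A n n = 1 := coc_of_le A le_rfl

private lemma coc_comp' (A : ℕ → X →L[ℝ] X) {n j m : ℕ} (hnj : n ≤ j) (hjm : j ≤ m) :
    coc A n m = (coc A j m).comp (coc A n j) := by
  induction m, hjm using Nat.le_induction with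
  | base => rw [coc_self']; ext z; simp
  | succ m hm ih => rw [coc_succ' A (hnj.trans hm), coc_succ' A hm, ih]; rfl

/-- if `T_Z` is invertible with `κ = ‖T_Z^{-1}‖` and the growth bound
`‖𝓐(m,n)x‖_m ≤ M(m/n)^a‖x‖_n` (`m ≥ n`) holds, then with
`L = max{M 2^a, M 2^{a+1} κ}` one has `‖𝓐(m,n)x‖_m ≤ L‖x‖_n` for all `m ≥ n`
and `x ∈ X(n)`. -/
theorem stmt9 [CompleteSpace X] (A : ℕ → X →L[ℝ] X) (N : ℕ → X → ℝ)
    (hN : NormFamily N) (Z : Submodule ℝ X) (hZ : IsClosed (Z : Set X))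
    (κ : ℝ) (hκ : 0 ≤ κ) (hinv : TInv A N (Z : Set X) κ)
    (M a : ℝ) (hM : 0 < M) (ha : 0 < a) (hgrow : Grow A N M a) :
    ∀ m n, 1 ≤ n → n ≤ m → ∀ x ∈ Xs A N n,
      N m (coc A n m x) ≤ max (M * (2 : ℝ) ^ a) (M * (2 : ℝ) ^ (a + 1) * κ) * N n x := by
  -- basic facts about the norm family
  have Nsmul : ∀ k, 1 ≤ k → ∀ (c : ℝ) (y : X), N k (c • y) = |c| * N k y :=
    fun k hk => (hN k hk).2.1
  have Nzero : ∀ k, 1 ≤ k → N k (0 : X) = 0 := by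
    intro k hk
    have := Nsmul k hk 0 0
    simpa using this
  have Nnonneg : ∀ k, 1 ≤ k → ∀ y : X, 0 ≤ N k y := by
    intro k hk y
    obtain ⟨c, C, hc, hcc⟩ := (hN k hk).2.2
    exact le_trans (mul_nonneg hc.le (norm_nonneg y)) (hcc y).1
  have Ndef : ∀ k, 1 ≤ k → ∀ y : X, N k y = 0 → y = 0 := by
    intro k hk y hy
    obtain ⟨c, C, hc, hcc⟩ := (hN k hk).2.2
    have := (hcc y).1
    rw [hy] at this
    have : ‖y‖ ≤ 0 := by nlinarith
    simpa using le_antisymm this (norm_nonneg y)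
  intro m n hn hnm x hx
  have hm1 : 1 ≤ m := hn.trans hnm
  have hL1 : M * (2 : ℝ) ^ a ≤ max (M * (2 : ℝ) ^ a) (M * (2 : ℝ) ^ (a + 1) * κ) :=
    le_max_left _ _
  have hL2 : M * (2 : ℝ) ^ (a + 1) * κ ≤ max (M * (2 : ℝ) ^ a) (M * (2 : ℝ) ^ (a + 1) * κ) :=
    le_max_right _ _
  have hLpos : (0 : ℝ) < max (M * (2 : ℝ) ^ a) (M * (2 : ℝ) ^ (a + 1) * κ) :=
    lt_of_lt_of_le (by positivity) hL1
  by_cases hbm : N m (coc A n m x) = 0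
  · rw [hbm]; exact mul_nonneg hLpos.le (Nnonneg n hn x)
  by_cases hm2 : m ≤ 2 * n
  · -- easy case : m ≤ 2n
    have h1 : ((m : ℝ) / n) ^ a ≤ (2 : ℝ) ^ a := by
      apply Real.rpow_le_rpow (by positivity)
      · rw [div_le_iff₀ (by positivity)]
        have h2n : (m : ℝ) ≤ 2 * (n : ℝ) := by exact_mod_cast hm2
        linarith
      · exact ha.le
    calc N m (coc A n m x) ≤ M * ((m : ℝ) / n) ^ a * N n x := hgrow m n hn hnm x
      _ ≤ M * (2 : ℝ) ^ a * N n x := by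
          apply mul_le_mul_of_nonneg_right _ (Nnonneg n hn x)
          exact mul_le_mul_of_nonneg_left h1 hM.le
      _ ≤ _ := mul_le_mul_of_nonneg_right hL1 (Nnonneg n hn x)
  push_neg at hm2
  -- hard case : 2n < m
  set b : ℕ → ℝ := fun j => N j (coc A n j x) with hbdef
  obtain ⟨S', hS'⟩ := hx
  have hbpos : ∀ j, n ≤ j → j ≤ m → 0 < b j := by
    intro j hnj hjm
    rcases lt_or_eq_of_le (Nnonneg j (hn.trans hnj) (coc A n j x)) with h | h
    · exact h
    · exfalso
      apply hbm
      have hzero : coc A n j x = 0 := Ndef j (hn.trans hnj) _ h.symm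
      have : coc A n m x = coc A j m (coc A n j x) := by
        rw [coc_comp' A hnj hjm]; rfl
      rw [this, hzero, map_zero]
      exact Nzero m hm1
  have hcocn : coc A n n x = x := by rw [coc_self']; rfl
  have hNnx : 0 < N n x := by
    have h : 0 < b n := hbpos n le_rfl hnm
    have hb : b n = N n x := by simp only [hbdef, hcocn]
    linarith
  -- define the test sequences
  set s : ℕ → ℝ := fun k => ∑ j ∈ Finset.Icc (n + 1) (min k m), ((j : ℝ) * b j)⁻¹ with hsdef
  have hterm_nonneg : ∀ k, ∀ j ∈ Finset.Icc (n + 1) (min k m), (0 : ℝ) ≤ ((j : ℝ) * b j)⁻¹ := by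
    intro k j hj
    rw [Finset.mem_Icc] at hj
    have hj1 : n ≤ j := by omega
    have hj2 : j ≤ m := by omega
    have := hbpos j hj1 hj2
    positivity
  have hs_nonneg : ∀ k, 0 ≤ s k := fun k => Finset.sum_nonneg (hterm_nonneg k)
  have hs_le : ∀ k, s k ≤ s m := by
    intro k
    apply Finset.sum_le_sum_of_subset_of_nonneg
    · apply Finset.Icc_subset_Icc_right; omega
    · intro j hj _
      exact hterm_nonneg m j hj
  have hs_zero : ∀ k, k ≤ n → s k = 0 := by
    intro k hk
    rw [hsdef]
    simp only
    rw [Finset.Icc_eq_empty (by omega), Finset.sum_empty]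
  set xh : ℕ → X := fun k => s k • coc A n k x with hxhdef
  have hxh_zero : ∀ k, k ≤ n → xh k = 0 := by
    intro k hk; rw [hxhdef]; simp only [hs_zero k hk, zero_smul]
  have hxhN : ∀ k, 1 ≤ k → N k (xh k) = s k * b k := by
    intro k hk
    rw [hxhdef]
    simp only [Nsmul k hk, abs_of_nonneg (hs_nonneg k)]
    rfl
  have hSpos : 0 < S' := lt_of_lt_of_le (by rw [hcocn]; exact hNnx) (hS' n le_rfl)
  have hxhY : MemY N xh := by
    refine ⟨s m * S', fun k hk => ?_⟩
    rw [hxhN k hk]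
    rcases le_or_gt k n with h | h
    · rw [hs_zero k h, zero_mul]
      exact mul_nonneg (hs_nonneg m) hSpos.le
    · exact mul_le_mul (hs_le k) (hS' k h.le) (Nnonneg k hk _) (hs_nonneg m)
  -- computation of TOp A xh
  have hT : ∀ k, 1 ≤ k → N k (TOp A xh k) ≤ 1 := by
    intro k hk
    rcases Nat.lt_or_ge k 2 with h2 | h2
    · interval_cases k
      rw [TOp, if_pos le_rfl, Nzero 1 le_rfl]
      norm_num
    · obtain ⟨j, rfl⟩ : ∃ j, k = j + 1 := ⟨k - 1, by omega⟩
      have hj1 : 1 ≤ j := by omega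
      rw [TOp]
      rw [if_neg (by omega)]
      simp only [Nat.add_sub_cancel]
      rcases Nat.lt_or_ge j n with hjn | hjn
      · -- j < n : everything vanishes
        rw [hxh_zero (j+1) (by omega), hxh_zero j (by omega), map_zero, sub_zero, smul_zero,
          Nzero _ hk]
        norm_num
      · have hA : A j (xh j) = s j • coc A n (j + 1) x := by
          rw [hxhdef]
          simp only [map_smul]
          rw [coc_succ' A hjn]; rfl
        have hdiff : xh (j + 1) - A j (xh j) = (s (j + 1) - s j) • coc A n (j + 1) x := by
          rw [hA, hxhdef, sub_smul]
        rcases Nat.lt_or_ge m (j + 1) with hjm | hjm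
        · -- j ≥ m : coefficient difference is zero
          have : s (j + 1) = s j := by
            rw [hsdef]
            simp only
            rw [Nat.min_eq_right (by omega), Nat.min_eq_right (by omega)]
          rw [hdiff, this, sub_self, zero_smul, smul_zero, Nzero _ hk]
          norm_num
        · -- n ≤ j, j + 1 ≤ m
          have hb1 : 0 < b (j + 1) := hbpos (j + 1) (by omega) hjm
          have hstep : s (j + 1) - s j = (((j : ℝ) + 1) * b (j + 1))⁻¹ := by
            rw [hsdef]
            simp only
            rw [Nat.min_eq_left hjm, Nat.min_eq_left (by omega)]
            rw [Finset.sum_Icc_succ_top (by omega)]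
            push_cast
            ring
          rw [hdiff, hstep, smul_smul, Nsmul _ hk]
          have hcoef : ((j : ℕ) + 1 : ℝ) * (((j : ℝ) + 1) * b (j + 1))⁻¹ = (b (j + 1))⁻¹ := by
            have : ((j : ℝ) + 1) ≠ 0 := by positivity
            field_simp
          push_cast at hcoef ⊢
          rw [hcoef, abs_of_nonneg (by positivity)]
          rw [hbdef]
          simp only
          rw [hbdef] at hb1
          rw [inv_mul_cancel₀ (ne_of_gt hb1)]
  -- xh is in the domain, TOp A xh is in Y₀
  have hD : MemD A N (Z : Set X) xh := by
    refine ⟨⟨?_, hxhY⟩, ⟨1, hT⟩⟩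
    rw [hxh_zero 1 hn]
    exact Z.zero_mem
  have hY0 : MemY0 N (TOp A xh) := by
    refine ⟨?_, ⟨1, hT⟩⟩
    rw [TOp, if_pos le_rfl]
  -- apply the invertibility bound
  have hkey : N m (xh m) ≤ κ * 1 :=
    hinv.2.2 (TOp A xh) xh hY0 hD (fun _ _ => rfl) 1 hT m hm1
  rw [hxhN m hm1, mul_one] at hkey
  -- lower bound for s m
  have hsub : Finset.Icc (n + 1) (2 * n) ⊆ Finset.Icc (n + 1) (min m m) := by
    apply Finset.Icc_subset_Icc_right; omega
  have hlow : (n : ℝ) * ((2 * (n : ℝ)) * (M * (2 : ℝ) ^ a * N n x))⁻¹ ≤ s m := by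
    have h1 : ∀ j ∈ Finset.Icc (n + 1) (2 * n),
        ((2 * (n : ℝ)) * (M * (2 : ℝ) ^ a * N n x))⁻¹ ≤ ((j : ℝ) * b j)⁻¹ := by
      intro j hj
      rw [Finset.mem_Icc] at hj
      have hj1 : n ≤ j := by omega
      have hjm : j ≤ m := by omega
      have hbj : 0 < b j := hbpos j hj1 hjm
      have h2a : (0 : ℝ) < (2 : ℝ) ^ a := Real.rpow_pos_of_pos (by norm_num) a
      have hnpos : (0 : ℝ) < (n : ℝ) := Nat.cast_pos.mpr hn
      apply inv_anti₀
      · exact mul_pos (Nat.cast_pos.mpr (by omega)) hbj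
      · have hgj : b j ≤ M * ((j : ℝ) / n) ^ a * N n x := by
          rw [hbdef]
          exact hgrow j n hn hj1 x
        have h2 : ((j : ℝ) / n) ^ a ≤ (2 : ℝ) ^ a := by
          apply Real.rpow_le_rpow (by positivity)
          · rw [div_le_iff₀ (by positivity)]
            push_cast
            have : (j : ℝ) ≤ 2 * n := by exact_mod_cast hj.2
            linarith
          · exact ha.le
        have h3 : b j ≤ M * (2 : ℝ) ^ a * N n x :=
          hgj.trans (mul_le_mul_of_nonneg_right
            (mul_le_mul_of_nonneg_left h2 hM.le) hNnx.le)
        have h4 : (j : ℝ) ≤ 2 * n := by exact_mod_cast hj.2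
        have hb0 : 0 ≤ b j := hbj.le
        have hjpos : (0 : ℝ) < j := Nat.cast_pos.mpr (by omega)
        nlinarith [mul_le_mul h4 h3 hb0 (by positivity : (0:ℝ) ≤ 2 * (n:ℝ))]
    calc (n : ℝ) * ((2 * (n : ℝ)) * (M * (2 : ℝ) ^ a * N n x))⁻¹
        = ∑ j ∈ Finset.Icc (n + 1) (2 * n), ((2 * (n : ℝ)) * (M * (2 : ℝ) ^ a * N n x))⁻¹ := by
          rw [Finset.sum_const, Nat.card_Icc]
          have : 2 * n + 1 - (n + 1) = n := by omega
          rw [this, nsmul_eq_mul]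
      _ ≤ ∑ j ∈ Finset.Icc (n + 1) (2 * n), ((j : ℝ) * b j)⁻¹ := Finset.sum_le_sum h1
      _ ≤ s m := Finset.sum_le_sum_of_subset_of_nonneg hsub
            (fun j hj _ => hterm_nonneg m j hj)
  have hP : (n : ℝ) * ((2 * (n : ℝ)) * (M * (2 : ℝ) ^ a * N n x))⁻¹
      = (M * (2 : ℝ) ^ (a + 1) * N n x)⁻¹ := by
    have h2 : (2 : ℝ) ^ (a + 1) = (2 : ℝ) ^ a * 2 := by
      rw [Real.rpow_add (by norm_num), Real.rpow_one]
    have hn0 : (n : ℝ) ≠ 0 := by positivity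
    have h2a : (0 : ℝ) < (2 : ℝ) ^ a := Real.rpow_pos_of_pos (by norm_num) a
    rw [h2]
    field_simp
  rw [hP] at hlow
  -- conclude
  have hPpos : (0 : ℝ) < M * (2 : ℝ) ^ (a + 1) * N n x := by
    have h2a : (0 : ℝ) < (2 : ℝ) ^ (a + 1) := Real.rpow_pos_of_pos (by norm_num) (a + 1)
    positivity
  have hbm_nonneg : 0 ≤ b m := Nnonneg m hm1 _
  have hfin : b m ≤ M * (2 : ℝ) ^ (a + 1) * N n x * κ := by
    have h1 : (M * (2 : ℝ) ^ (a + 1) * N n x)⁻¹ * b m ≤ s m * b m :=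
      mul_le_mul_of_nonneg_right hlow hbm_nonneg
    have h2 : (M * (2 : ℝ) ^ (a + 1) * N n x)⁻¹ * b m ≤ κ := h1.trans hkey
    calc b m = (M * (2 : ℝ) ^ (a + 1) * N n x) * ((M * (2 : ℝ) ^ (a + 1) * N n x)⁻¹ * b m) := by
          field_simp
      _ ≤ (M * (2 : ℝ) ^ (a + 1) * N n x) * κ := mul_le_mul_of_nonneg_left h2 hPpos.le
      _ = M * (2 : ℝ) ^ (a + 1) * N n x * κ := rfl
  calc N m (coc A n m x) = b m := rfl
    _ ≤ M * (2 : ℝ) ^ (a + 1) * N n x * κ := hfin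
    _ = (M * (2 : ℝ) ^ (a + 1) * κ) * N n x := by ring
    _ ≤ _ := mul_le_mul_of_nonneg_right hL2 (Nnonneg n hn x)
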